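/- Stone–Weierstrass for C_b(Ω, X) with Heine–Borel target: Let Ω be a completely regular Hausdorff space, X a locally convex Hausdorff space in which every closed bounded set is compact, A ⊆ C(Ω, [0,1]) a multiplier of a subset W ⊆ C_b(Ω, X) which separates disjoint zero-sets of Ω, and suppose W contains the constant function t ↦ x for every x in some dense subset X₀ of X. Then the closure of W in the uniform topology equals C_b(Ω, X). -/

import Mathlib

open Set
open scoped Topology Pointwise

section Mult

variable {Ω X : Type*} [TopologicalSpace Ω] [AddCommGroup X] [Module ℝ X] [TopologicalSpace X]

/-- A multiplier of `W`: a continuous `[0,1]`-valued function `φ` such that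
`φ • g + (1 - φ) • h ∈ W` for all `g h ∈ W`. -/
def IsMult (W : Set (Ω → X)) (φ : Ω → ℝ) : Prop :=
  Continuous φ ∧ (∀ x, φ x ∈ Set.Icc (0 : ℝ) 1) ∧
    ∀ g ∈ W, ∀ h ∈ W, (fun x => φ x • g x + (1 - φ x) • h x) ∈ W

theorem isMult_one {W : Set (Ω → X)} : IsMult W fun _ => (1 : ℝ) := by
  refine ⟨continuous_const, fun x => by norm_num, fun g hg h hh => ?_⟩
  convert hg using 1
  funext x; simp

theorem IsMult.one_sub {W : Set (Ω → X)} {φ : Ω → ℝ} (hφ : IsMult W φ) :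
    IsMult W fun x => 1 - φ x := by
  refine ⟨continuous_const.sub hφ.1, fun x => ?_, fun g hg h hh => ?_⟩
  · obtain ⟨h1, h2⟩ := hφ.2.1 x
    exact ⟨by simp only; linarith, by simp only; linarith⟩
  · have h2 := hφ.2.2 h hh g hg
    have : (fun x => (1 - φ x) • g x + (1 - (1 - φ x)) • h x)
        = fun x => φ x • h x + (1 - φ x) • g x := by
      funext x; rw [sub_sub_cancel]; exact add_comm _ _
    show (fun x => (1 - φ x) • g x + (1 - (1 - φ x)) • h x) ∈ W
    rwa [this]

theorem IsMult.mul {W : Set (Ω → X)} {φ ψ : Ω → ℝ} (hφ : IsMult W φ) (hψ : IsMult W ψ) :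
    IsMult W fun x => φ x * ψ x := by
  refine ⟨hφ.1.mul hψ.1, fun x => ?_, fun g hg h hh => ?_⟩
  · obtain ⟨h1, h2⟩ := hφ.2.1 x
    obtain ⟨h3, h4⟩ := hψ.2.1 x
    exact ⟨mul_nonneg h1 h3, mul_le_one₀ h2 h3 h4⟩
  · have h1 := hψ.2.2 g hg h hh
    have h2 := hφ.2.2 _ h1 h hh
    have : (fun x => φ x • (ψ x • g x + (1 - ψ x) • h x) + (1 - φ x) • h x)
        = fun x => (φ x * ψ x) • g x + (1 - φ x * ψ x) • h x := by
      funext x; module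
    show (fun x => (φ x * ψ x) • g x + (1 - φ x * ψ x) • h x) ∈ W
    rwa [this] at h2

theorem IsMult.pow {W : Set (Ω → X)} {φ : Ω → ℝ} (hφ : IsMult W φ) :
    ∀ m : ℕ, IsMult W fun x => φ x ^ m
  | 0 => by
    have : (fun x : Ω => φ x ^ 0) = fun _ => (1 : ℝ) := by funext x; rw [pow_zero]
    rw [this]; exact isMult_one
  | (m + 1) => by
    have h := (hφ.pow m).mul hφ
    have : (fun x => φ x ^ m * φ x) = fun x => φ x ^ (m + 1) := by
      funext x; rw [pow_succ]
    rwa [this] at h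

/-- The basic "step function" construction: `1 - (1 - φ^m)^k`. -/
theorem IsMult.exists_step {W : Set (Ω → X)} {φ : Ω → ℝ} (hφ : IsMult W φ)
    {a b δ : ℝ} (hb0 : 0 < b) (hb1 : b ≤ 1) (hab : a < b) (hδ : 0 < δ) :
    ∃ ψ : Ω → ℝ, IsMult W ψ ∧ (∀ ω, φ ω ≤ a → ψ ω ≤ δ) ∧ (∀ ω, b ≤ φ ω → 1 - δ ≤ ψ ω) := by
  set a₀ := max a 0 with ha₀def
  have ha₀0 : 0 ≤ a₀ := le_max_right a 0
  have ha₀b : a₀ < b := max_lt hab hb0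
  have ha₀1 : a₀ < 1 := lt_of_lt_of_le ha₀b hb1
  obtain ⟨m, h1, h2⟩ : ∃ m : ℕ, a₀ ^ m ≤ δ / 2 ∧ (a₀ / b) ^ m ≤ δ ^ 2 / 2 := by
    obtain ⟨m₁, hm₁⟩ := exists_pow_lt_of_lt_one (half_pos hδ) ha₀1
    have hq0 : 0 ≤ a₀ / b := div_nonneg ha₀0 hb0.le
    have hq1 : a₀ / b < 1 := (div_lt_one hb0).2 ha₀b
    obtain ⟨m₂, hm₂⟩ := exists_pow_lt_of_lt_one (x := δ ^ 2 / 2) (by positivity) hq1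
    exact ⟨max m₁ m₂,
      le_trans (pow_le_pow_of_le_one ha₀0 ha₀1.le (le_max_left _ _)) hm₁.le,
      le_trans (pow_le_pow_of_le_one hq0 hq1.le (le_max_right _ _)) hm₂.le⟩
  have hbm : 0 < b ^ m := pow_pos hb0 m
  have hbm1 : b ^ m ≤ 1 := pow_le_one₀ hb0.le hb1
  obtain ⟨k, hk1, hk2⟩ : ∃ k : ℕ, 1 / δ ≤ (k : ℝ) * b ^ m ∧ (k : ℝ) * a₀ ^ m ≤ δ := by
    refine ⟨⌈1 / (δ * b ^ m)⌉₊, ?_, ?_⟩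
    · have hle : 1 / (δ * b ^ m) ≤ (⌈1 / (δ * b ^ m)⌉₊ : ℝ) := Nat.le_ceil _
      rw [div_le_iff₀ hδ]
      rw [div_le_iff₀ (by positivity)] at hle
      nlinarith
    · have hceil : ((⌈1 / (δ * b ^ m)⌉₊ : ℕ) : ℝ) < 1 / (δ * b ^ m) + 1 :=
        Nat.ceil_lt_add_one (by positivity)
      have he : (a₀ / b) ^ m = a₀ ^ m / b ^ m := div_pow a₀ b m
      have ham : 0 ≤ a₀ ^ m := pow_nonneg ha₀0 m
      have key : 1 / (δ * b ^ m) * a₀ ^ m ≤ δ / 2 := by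
        rw [he] at h2
        rw [div_le_iff₀ (by positivity)] at h2
        rw [div_mul_eq_mul_div, div_le_iff₀ (by positivity)]
        nlinarith
      nlinarith [mul_le_mul_of_nonneg_right hceil.le ham]
  refine ⟨fun ω => 1 - (1 - φ ω ^ m) ^ k, (((hφ.pow m).one_sub.pow k)).one_sub, ?_, ?_⟩
  · intro ω hω
    show 1 - (1 - φ ω ^ m) ^ k ≤ δ
    obtain ⟨hφ0, hφ1⟩ := hφ.2.1 ω
    have ht1 : φ ω ^ m ≤ a₀ ^ m := pow_le_pow_left₀ hφ0 (le_trans hω (le_max_left a 0)) m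
    have ht0 : 0 ≤ φ ω ^ m := pow_nonneg hφ0 m
    have htle1 : φ ω ^ m ≤ 1 := pow_le_one₀ hφ0 hφ1
    have hbern : 1 - (k : ℝ) * φ ω ^ m ≤ (1 - φ ω ^ m) ^ k := by
      have := one_add_mul_le_pow (a := -(φ ω ^ m)) (by linarith) k
      simpa [sub_eq_add_neg, mul_neg] using this
    have : (k : ℝ) * φ ω ^ m ≤ (k : ℝ) * a₀ ^ m :=
      mul_le_mul_of_nonneg_left ht1 (Nat.cast_nonneg k)
    linarith
  · intro ω hω
    show 1 - δ ≤ 1 - (1 - φ ω ^ m) ^ k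
    obtain ⟨hφ0, hφ1⟩ := hφ.2.1 ω
    have ht1 : b ^ m ≤ φ ω ^ m := pow_le_pow_left₀ hb0.le hω m
    have htle1 : φ ω ^ m ≤ 1 := pow_le_one₀ hφ0 hφ1
    have hs1 : (1 - φ ω ^ m) ^ k ≤ (1 - b ^ m) ^ k :=
      pow_le_pow_left₀ (by linarith) (by linarith) k
    have hs2 : (1 - b ^ m) ^ k ≤ δ := by
      have hB : 1 + (k : ℝ) * b ^ m ≤ (1 + b ^ m) ^ k := one_add_mul_le_pow (by linarith) k
      have hprod : (1 - b ^ m) ^ k * (1 + b ^ m) ^ k = (1 - (b ^ m) ^ 2) ^ k := by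
        rw [← mul_pow]; ring_nf
      have hle1 : (1 - (b ^ m) ^ 2) ^ k ≤ 1 :=
        pow_le_one₀ (by nlinarith) (by nlinarith)
      have hpos : (0 : ℝ) < 1 + (k : ℝ) * b ^ m := by positivity
      have hnn : (0 : ℝ) ≤ (1 - b ^ m) ^ k := pow_nonneg (by linarith) k
      have hmain : (1 - b ^ m) ^ k * (1 + (k : ℝ) * b ^ m) ≤ 1 := by
        calc (1 - b ^ m) ^ k * (1 + (k : ℝ) * b ^ m)
            ≤ (1 - b ^ m) ^ k * (1 + b ^ m) ^ k := mul_le_mul_of_nonneg_left hB hnn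
          _ = (1 - (b ^ m) ^ 2) ^ k := hprod
          _ ≤ 1 := hle1
      have hδk : 1 / δ ≤ 1 + (k : ℝ) * b ^ m := by linarith
      rw [div_le_iff₀ hδ] at hδk
      nlinarith
    linarith

end Mult

section Mult2

variable {Ω X : Type*} [TopologicalSpace Ω] [AddCommGroup X] [Module ℝ X] [TopologicalSpace X]

/-- Bump function around `c`. -/
theorem IsMult.exists_bump {W : Set (Ω → X)} {φ : Ω → ℝ} (hφ : IsMult W φ)
    {c r δ : ℝ} (hc0 : 0 ≤ c) (hc1 : c ≤ 1) (hr : 0 < r) (hδ : 0 < δ) :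
    ∃ β : Ω → ℝ, IsMult W β ∧ (∀ ω, |φ ω - c| ≤ r → 1 - 2 * δ ≤ β ω) ∧
      (∀ ω, 2 * r ≤ |φ ω - c| → β ω ≤ δ) := by
  -- left factor
  obtain ⟨L, hLm, hLa, hLb⟩ : ∃ L : Ω → ℝ, IsMult W L ∧
      (∀ ω, φ ω ≤ c - 2 * r → L ω ≤ δ) ∧ (∀ ω, c - r ≤ φ ω → 1 - δ ≤ L ω) := by
    by_cases hL : 0 < c - r
    · exact hφ.exists_step hL (by linarith) (by linarith : c - 2*r < c - r) hδ
    · refine ⟨fun _ => 1, isMult_one, fun ω hω => absurd hω ?_, fun ω _ => by simp only; linarith⟩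
      have := (hφ.2.1 ω).1
      push_neg at hL
      intro h; linarith
  -- right factor
  obtain ⟨R, hRm, hRa, hRb⟩ : ∃ R : Ω → ℝ, IsMult W R ∧
      (∀ ω, c + 2 * r ≤ φ ω → R ω ≤ δ) ∧ (∀ ω, φ ω ≤ c + r → 1 - δ ≤ R ω) := by
    by_cases hR : c + r < 1
    · obtain ⟨S, hSm, hSa, hSb⟩ := hφ.exists_step (b := min (c + 2*r) 1)
        (lt_min (by linarith) one_pos) (min_le_right _ _) (lt_min (by linarith) hR) hδ
      refine ⟨fun ω => 1 - S ω, hSm.one_sub, fun ω hω => ?_, fun ω hω => ?_⟩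
      · have : 1 - δ ≤ S ω := hSb ω (le_trans (min_le_left _ _) hω)
        simp only; linarith
      · have : S ω ≤ δ := hSa ω hω
        simp only; linarith
    · refine ⟨fun _ => 1, isMult_one, fun ω hω => ?_, fun ω _ => by simp only; linarith⟩
      have := (hφ.2.1 ω).2
      push_neg at hR
      exfalso; linarith
  refine ⟨fun ω => L ω * R ω, hLm.mul hRm, fun ω hω => ?_, fun ω hω => ?_⟩
  · rw [abs_le] at hω
    have h1 : 1 - δ ≤ L ω := hLb ω (by linarith [hω.1])
    have h2 : 1 - δ ≤ R ω := hRb ω (by linarith [hω.2])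
    obtain ⟨hL0, hL1⟩ := hLm.2.1 ω
    obtain ⟨hR0, hR1⟩ := hRm.2.1 ω
    show 1 - 2 * δ ≤ L ω * R ω
    nlinarith [mul_nonneg (by linarith : (0:ℝ) ≤ 1 - L ω) (by linarith : (0:ℝ) ≤ 1 - R ω)]
  · obtain ⟨hL0, hL1⟩ := hLm.2.1 ω
    obtain ⟨hR0, hR1⟩ := hRm.2.1 ω
    show L ω * R ω ≤ δ
    rcases le_abs.1 hω with h | h
    · have : R ω ≤ δ := hRa ω (by linarith)
      nlinarith
    · have : L ω ≤ δ := hLa ω (by linarith)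
      nlinarith

theorem isMult_finset_prod {W : Set (Ω → X)} {ι : Type*} (s : Finset ι) (g : ι → Ω → ℝ)
    (h : ∀ i ∈ s, IsMult W (g i)) : IsMult W fun ω => ∏ i ∈ s, g i ω := by
  induction s using Finset.cons_induction with
  | empty => simpa using (isMult_one (W := W))
  | cons a s ha ih =>
    have h2 := (h a (Finset.mem_cons_self a s)).mul
      (ih fun i hi => h i (Finset.mem_cons_of_mem hi))
    have : (fun ω => g a ω * ∏ i ∈ s, g i ω) = fun ω => ∏ i ∈ Finset.cons a s ha, g i ω := by
      funext ω; rw [Finset.prod_cons]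
    rwa [this] at h2

theorem one_sub_prod_le_sum {ι : Type*} (s : Finset ι) (a : ι → ℝ)
    (h0 : ∀ i ∈ s, 0 ≤ a i) (h1 : ∀ i ∈ s, a i ≤ 1) :
    1 - ∏ i ∈ s, (1 - a i) ≤ ∑ i ∈ s, a i := by
  induction s using Finset.cons_induction with
  | empty => simp
  | cons c s hc ih =>
    rw [Finset.prod_cons, Finset.sum_cons]
    have ih' := ih (fun i hi => h0 i (Finset.mem_cons_of_mem hi))
      (fun i hi => h1 i (Finset.mem_cons_of_mem hi))
    have hP0 : 0 ≤ ∏ i ∈ s, (1 - a i) :=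
      Finset.prod_nonneg fun i hi => by linarith [h1 i (Finset.mem_cons_of_mem hi)]
    have hP1 : ∏ i ∈ s, (1 - a i) ≤ 1 :=
      Finset.prod_le_one (fun i hi => by linarith [h1 i (Finset.mem_cons_of_mem hi)])
        (fun i hi => by linarith [h0 i (Finset.mem_cons_of_mem hi)])
    have hc0 := h0 c (Finset.mem_cons_self c s)
    have hc1 := h1 c (Finset.mem_cons_self c s)
    nlinarith

/-- Von Neumann / Jewett separation lemma. -/
theorem IsMult.exists_separating {W : Set (Ω → X)} {φ : Ω → ℝ} (hφ : IsMult W φ)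
    {S₀ S₁ : Set Ω} (hd : closure (φ '' S₀) ∩ closure (φ '' S₁) = ∅)
    {δ : ℝ} (hδ : 0 < δ) :
    ∃ ψ : Ω → ℝ, IsMult W ψ ∧ (∀ ω ∈ S₀, ψ ω ≤ δ) ∧ (∀ ω ∈ S₁, 1 - δ ≤ ψ ω) := by
  set K₀ := closure (φ '' S₀) with hK₀def
  set K₁ := closure (φ '' S₁) with hK₁def
  have hK₁sub : K₁ ⊆ Icc (0 : ℝ) 1 :=
    closure_minimal (image_subset_iff.2 fun ω _ => hφ.2.1 ω) isClosed_Icc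
  have hK₁c : IsCompact K₁ := isCompact_Icc.of_isClosed_subset isClosed_closure hK₁sub
  rcases eq_empty_or_nonempty K₀ with h0 | h0
  · refine ⟨fun _ => 1, isMult_one, fun ω hω => ?_, fun ω _ => by simp only; linarith⟩
    exact absurd (h0 ▸ subset_closure (mem_image_of_mem φ hω) : φ ω ∈ (∅ : Set ℝ)) (by simp)
  · have hK₀closed : IsClosed K₀ := isClosed_closure
    have hrpos : ∀ c : ℝ, c ∈ K₁ → 0 < Metric.infDist c K₀ := by
      intro c hc
      refine (hK₀closed.notMem_iff_infDist_pos h0).1 ?_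
      intro hmem
      exact (Set.eq_empty_iff_forall_notMem.1 hd c) ⟨hmem, hc⟩
    obtain ⟨s, hs⟩ := hK₁c.elim_finite_subcover
      (fun c : K₁ => Metric.ball (c : ℝ) (Metric.infDist (c : ℝ) K₀ / 4))
      (fun _ => Metric.isOpen_ball)
      (fun c hc => mem_iUnion.2 ⟨⟨c, hc⟩, Metric.mem_ball_self (by
        have := hrpos c hc; linarith)⟩)
    set δ' := δ / (2 * (s.card + 1)) with hδ'def
    have hδ' : 0 < δ' := by positivity
    have hbump : ∀ c : K₁, ∃ β : Ω → ℝ, IsMult W β ∧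
        (∀ ω, |φ ω - (c : ℝ)| ≤ Metric.infDist (c : ℝ) K₀ / 4 → 1 - 2 * δ' ≤ β ω) ∧
        (∀ ω, 2 * (Metric.infDist (c : ℝ) K₀ / 4) ≤ |φ ω - (c : ℝ)| → β ω ≤ δ') := by
      intro c
      exact hφ.exists_bump (hK₁sub c.2).1 (hK₁sub c.2).2 (by linarith [hrpos c c.2]) hδ'
    choose β hβm hβin hβout using hbump
    refine ⟨fun ω => 1 - ∏ c ∈ s, (1 - β c ω), (isMult_finset_prod s _
      fun c _ => (hβm c).one_sub).one_sub, ?_, ?_⟩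
    · intro ω hω
      show 1 - ∏ c ∈ s, (1 - β c ω) ≤ δ
      have hφω : φ ω ∈ K₀ := subset_closure (mem_image_of_mem φ hω)
      have hout : ∀ c ∈ s, β c ω ≤ δ' := by
        intro c _
        refine hβout c ω ?_
        have h1 : Metric.infDist (c : ℝ) K₀ ≤ dist (c : ℝ) (φ ω) :=
          Metric.infDist_le_dist_of_mem hφω
        rw [Real.dist_eq] at h1
        rw [abs_sub_comm]
        linarith [Metric.infDist_nonneg (s := K₀) (x := (c : ℝ))]
      have hsum := one_sub_prod_le_sum s (fun c => β c ω)
        (fun c hc => ((hβm c).2.1 ω).1) (fun c hc => ((hβm c).2.1 ω).2)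
      have hcard : ∑ c ∈ s, β c ω ≤ (s.card : ℝ) * δ' := by
        calc ∑ c ∈ s, β c ω ≤ ∑ _c ∈ s, δ' := Finset.sum_le_sum fun c hc => hout c hc
          _ = (s.card : ℝ) * δ' := by rw [Finset.sum_const, nsmul_eq_mul]
      have : (s.card : ℝ) * δ' ≤ δ := by
        rw [hδ'def, ← mul_div_assoc, div_le_iff₀ (by positivity)]
        nlinarith [Nat.cast_nonneg (α := ℝ) s.card, hδ.le]
      linarith
    · intro ω hω
      show 1 - δ ≤ 1 - ∏ c ∈ s, (1 - β c ω)
      have hφω : φ ω ∈ K₁ := subset_closure (mem_image_of_mem φ hω)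
      obtain ⟨c, hcs, hcball⟩ := mem_iUnion₂.1 (hs hφω)
      have hin : 1 - 2 * δ' ≤ β c ω := by
        refine hβin c ω ?_
        rw [Metric.mem_ball, Real.dist_eq] at hcball
        linarith
      have hprodle : ∏ i ∈ s, (1 - β i ω) ≤ (1 - β c ω) * 1 := by
        rw [← Finset.mul_prod_erase s _ hcs]
        refine mul_le_mul_of_nonneg_left ?_ (by linarith [((hβm c).2.1 ω).2])
        refine Finset.prod_le_one (fun i hi => by linarith [((hβm i).2.1 ω).2])
          (fun i hi => by linarith [((hβm i).2.1 ω).1])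
      have hn : (0:ℝ) ≤ (s.card : ℝ) := Nat.cast_nonneg _
      have h1 : δ / (2 * ((s.card : ℝ) + 1)) ≤ δ / 2 :=
        div_le_div_of_nonneg_left hδ.le (by norm_num) (by linarith)
      have h2δ' : 2 * δ' ≤ δ := by
        rw [hδ'def]
        linarith
      linarith [hprodle, hin]
end Mult2

section Mix

variable {Ω X : Type*} [TopologicalSpace Ω] [AddCommGroup X] [Module ℝ X] [TopologicalSpace X]

/-- Iterated convex-type combination through a list of (multiplier, point) pairs. -/
def mixList (L : List ((Ω → ℝ) × X)) (g₀ : Ω → X) : Ω → X :=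
  match L with
  | [] => g₀
  | q :: L => fun ω => q.1 ω • q.2 + (1 - q.1 ω) • mixList L g₀ ω

theorem mixList_mem {W : Set (Ω → X)} (L : List ((Ω → ℝ) × X)) (g₀ : Ω → X)
    (hL : ∀ q ∈ L, IsMult W q.1 ∧ (fun _ : Ω => q.2) ∈ W) (h₀ : g₀ ∈ W) :
    mixList L g₀ ∈ W := by
  induction L with
  | nil => exact h₀
  | cons q L ih =>
    have h1 := ih fun r hr => hL r (List.mem_cons_of_mem _ hr)
    have h2 := (hL q (List.mem_cons_self)).1.2.2 _ (hL q (List.mem_cons_self)).2 _ h1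
    exact h2

theorem list_prod_nonneg' {l : List ℝ} (h : ∀ a ∈ l, (0:ℝ) ≤ a) : 0 ≤ l.prod := by
  induction l with
  | nil => simp
  | cons a l ih =>
    rw [List.prod_cons]
    exact mul_nonneg (h a (List.mem_cons_self))
      (ih fun b hb => h b (List.mem_cons_of_mem _ hb))

theorem list_prod_le_one' {l : List ℝ} (h : ∀ a ∈ l, a ∈ Set.Icc (0:ℝ) 1) : l.prod ≤ 1 := by
  induction l with
  | nil => simp
  | cons a l ih =>
    rw [List.prod_cons]
    have h1 := h a (List.mem_cons_self)
    have h2 := ih fun b hb => h b (List.mem_cons_of_mem _ hb)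
    have h3 := list_prod_nonneg' fun b hb => (h b (List.mem_cons_of_mem _ hb)).1
    nlinarith [h1.1, h1.2]

theorem list_prod_le_of_mem' {l : List ℝ} {a δ : ℝ} (h : ∀ b ∈ l, b ∈ Set.Icc (0:ℝ) 1)
    (ha : a ∈ l) (haδ : a ≤ δ) (hδ : 0 ≤ δ) : l.prod ≤ δ := by
  induction l with
  | nil => cases ha
  | cons b l ih =>
    rw [List.prod_cons]
    have hb := h b (List.mem_cons_self)
    have hP0 := list_prod_nonneg' fun x hx => (h x (List.mem_cons_of_mem _ hx)).1
    have hP1 := list_prod_le_one' fun x hx => h x (List.mem_cons_of_mem _ hx)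
    rcases List.mem_cons.1 ha with rfl | hmem
    · nlinarith [hb.1]
    · have := ih (fun x hx => h x (List.mem_cons_of_mem _ hx)) hmem
      nlinarith [hb.1, hb.2]

theorem mixList_est (p : Seminorm ℝ X) (y : X) (ω : Ω) {ε2 δ B : ℝ}
    (hε2 : 0 ≤ ε2) (hδ : 0 ≤ δ) (hB : 0 ≤ B)
    (L : List ((Ω → ℝ) × X)) (g₀ : Ω → X)
    (hL : ∀ q ∈ L, q.1 ω ∈ Set.Icc (0:ℝ) 1 ∧ p (y - q.2) ≤ B ∧
      (p (y - q.2) < ε2 ∨ q.1 ω ≤ δ))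
    (h₀ : p (y - g₀ ω) ≤ B) :
    p (y - mixList L g₀ ω) ≤
      ε2 + L.length * δ * B + (L.map fun q => 1 - q.1 ω).prod * B := by
  induction L with
  | nil =>
    simp only [mixList, List.length_nil, List.map_nil, List.prod_nil, Nat.cast_zero]
    linarith
  | cons q L ih =>
    obtain ⟨⟨ht0, ht1⟩, hBq, hcase⟩ := hL q (List.mem_cons_self)
    have ihh := ih fun r hr => hL r (List.mem_cons_of_mem _ hr)
    have hP0 : (0:ℝ) ≤ (L.map fun q => 1 - q.1 ω).prod := by
      refine list_prod_nonneg' fun b hb => ?_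
      obtain ⟨r, hr, rfl⟩ := List.mem_map.1 hb
      linarith [((hL r (List.mem_cons_of_mem _ hr)).1).2]
    have hkey : y - mixList (q :: L) g₀ ω
        = q.1 ω • (y - q.2) + (1 - q.1 ω) • (y - mixList L g₀ ω) := by
      show y - (q.1 ω • q.2 + (1 - q.1 ω) • mixList L g₀ ω) = _
      module
    have hp1 : p (y - mixList (q :: L) g₀ ω)
        ≤ q.1 ω * p (y - q.2) + (1 - q.1 ω) * p (y - mixList L g₀ ω) := by
      rw [hkey]
      refine (map_add_le_add p _ _).trans ?_
      rw [map_smul_eq_mul, map_smul_eq_mul, Real.norm_eq_abs, Real.norm_eq_abs,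
        abs_of_nonneg ht0, abs_of_nonneg (by linarith)]
    have hlen : (((q :: L).length : ℕ) : ℝ) = (L.length : ℝ) + 1 := by
      rw [List.length_cons]; push_cast; ring
    rw [List.map_cons, List.prod_cons, hlen]
    have hpy0 : 0 ≤ p (y - q.2) := apply_nonneg p _
    have hpm0 : 0 ≤ p (y - mixList L g₀ ω) := apply_nonneg p _
    have e1 : (1 - q.1 ω) * p (y - mixList L g₀ ω)
        ≤ (1 - q.1 ω) * (ε2 + L.length * δ * B + (L.map fun q => 1 - q.1 ω).prod * B) :=
      mul_le_mul_of_nonneg_left ihh (by linarith)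
    have e3 : 0 ≤ (L.length : ℝ) * δ * B :=
      mul_nonneg (mul_nonneg (Nat.cast_nonneg _) hδ) hB
    have e4 : 0 ≤ δ * B := mul_nonneg hδ hB
    have e6 : 0 ≤ q.1 ω * ε2 := mul_nonneg ht0 hε2
    have e7 : 0 ≤ q.1 ω * ((L.length : ℝ) * δ * B) := mul_nonneg ht0 e3
    rcases hcase with hlt | hsm
    · have e2 : q.1 ω * p (y - q.2) ≤ q.1 ω * ε2 :=
        mul_le_mul_of_nonneg_left hlt.le ht0
      nlinarith [e1, e2, e3, e4, e6, e7]
    · have e5 : q.1 ω * p (y - q.2) ≤ δ * B := by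
        have : q.1 ω * p (y - q.2) ≤ q.1 ω * B := mul_le_mul_of_nonneg_left hBq ht0
        nlinarith
      nlinarith [e1, e5, e3, e4, e6, e7]

theorem le_foldr_max {α : Type*} (g : α → ℝ) (l : List α) {x : α} (hx : x ∈ l) :
    g x ≤ l.foldr (fun v r => max (g v) r) 0 := by
  induction l with
  | nil => cases hx
  | cons a l ih =>
    rcases List.mem_cons.1 hx with rfl | h
    · exact le_max_left _ _
    · exact le_trans (ih h) (le_max_right _ _)

theorem foldr_max_nonneg {α : Type*} (g : α → ℝ) (l : List α) :
    0 ≤ l.foldr (fun v r => max (g v) r) 0 := by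
  induction l with
  | nil => exact le_refl 0
  | cons a l ih => exact le_trans ih (le_max_right _ _)

end Mix


/-- A zero-set of a topological space. -/
def IsZeroSet {Ω : Type*} [TopologicalSpace Ω] (Z : Set Ω) : Prop :=
  ∃ h : Ω → ℝ, Continuous h ∧ Z = h ⁻¹' {0}

theorem stmt_12 {Ω X : Type*} [TopologicalSpace Ω] [CompletelyRegularSpace Ω]
    [T2Space Ω] [AddCommGroup X] [Module ℝ X] [TopologicalSpace X]
    [IsTopologicalAddGroup X] [ContinuousSMul ℝ X] [LocallyConvexSpace ℝ X]
    [T2Space X]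
    (hHB : ∀ s : Set X, IsClosed s → Bornology.IsVonNBounded ℝ s → IsCompact s)
    (A : Set (Ω → ℝ)) (W : Set (Ω → X))
    (hAc : ∀ φ ∈ A, Continuous φ)
    (hA01 : ∀ φ ∈ A, ∀ x, φ x ∈ Set.Icc (0 : ℝ) 1)
    (hmul : ∀ φ ∈ A, ∀ g ∈ W, ∀ h ∈ W,
      (fun x => φ x • g x + (1 - φ x) • h x) ∈ W)
    (hsep : ∀ Z₁ Z₂ : Set Ω, IsZeroSet Z₁ → IsZeroSet Z₂ → Z₁ ∩ Z₂ = ∅ →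
      ∃ φ ∈ A, closure (φ '' Z₁) ∩ closure (φ '' Z₂) = ∅)
    (hW : ∀ g ∈ W, Continuous g ∧ Bornology.IsVonNBounded ℝ (Set.range g))
    (X₀ : Set X) (hX₀ : Dense X₀)
    (hconst : ∀ x ∈ X₀, (fun _ : Ω => x) ∈ W) :
    ∀ f : Ω → X, Continuous f → Bornology.IsVonNBounded ℝ (Set.range f) →
      ∀ p : Seminorm ℝ X, Continuous p → ∀ ε > (0 : ℝ),
        ∃ g ∈ W, ∀ x : Ω, p (f x - g x) < ε := by
  intro f hf hbdd p hp ε hε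
  -- a uniform bound for `p ∘ f`
  obtain ⟨C, hC0, hC⟩ : ∃ C : ℝ, 0 ≤ C ∧ ∀ ω, p (f ω) ≤ C := by
    have hUopen : IsOpen ((⇑p) ⁻¹' Set.Iio 1) := isOpen_Iio.preimage hp
    have hU : (⇑p) ⁻¹' Set.Iio 1 ∈ 𝓝 (0 : X) := hUopen.mem_nhds (by
      simp [Set.mem_preimage, map_zero])
    obtain ⟨r, hr, habs⟩ := (hbdd hU).exists_pos
    have hsub : Set.range f ⊆ (r : ℝ) • ((⇑p) ⁻¹' Set.Iio 1) := habs r (by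
      rw [Real.norm_eq_abs, abs_of_nonneg hr.le])
    refine ⟨r, hr.le, fun ω => ?_⟩
    obtain ⟨v, hv, hfv⟩ := hsub (Set.mem_range_self ω)
    have hpv : p v < 1 := hv
    have : p (f ω) = |r| * p v := by
      rw [← hfv, map_smul_eq_mul, Real.norm_eq_abs]
    rw [this, abs_of_nonneg hr.le]
    nlinarith [apply_nonneg p v]
  -- the closure of the range is compact
  have hbddcl : Bornology.IsVonNBounded ℝ (closure (Set.range f)) := by
    intro V hV
    obtain ⟨U, hU, hUc, hUV⟩ := exists_mem_nhds_isClosed_subset hV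
    obtain ⟨r, hr, habs⟩ := (hbdd hU).exists_pos
    rw [absorbs_iff_norm]
    refine ⟨max r 1, fun c hc => ?_⟩
    have hc1 : (1:ℝ) ≤ ‖c‖ := le_trans (le_max_right _ _) hc
    have hc0 : c ≠ 0 := by
      intro h; rw [h, norm_zero] at hc1; linarith
    have h1 : Set.range f ⊆ c • U := habs c (le_trans (le_max_left _ _) hc)
    have h2 : IsClosed (c • U) := hUc.smul_of_ne_zero hc0
    calc closure (Set.range f) ⊆ c • U := closure_minimal h1 h2
      _ ⊆ c • V := Set.smul_set_mono hUV
  have hK : IsCompact (closure (Set.range f)) := hHB _ isClosed_closure hbddcl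
  -- a point of X₀
  have : Nonempty X := ⟨0⟩
  obtain ⟨xd, hxd⟩ := hX₀.nonempty
  -- finite cover of the closure of the range by p-balls centered in X₀
  have hUopen : ∀ x : X, IsOpen {y : X | p (y - x) < ε / 4} := fun x =>
    isOpen_lt (hp.comp (continuous_id.sub continuous_const)) continuous_const
  have hcov : closure (Set.range f) ⊆ ⋃ i : X₀, {y : X | p (y - (i : X)) < ε / 4} := by
    intro y hy
    have hopen : IsOpen {z : X | p (y - z) < ε / 4} :=
      isOpen_lt (hp.comp (continuous_const.sub continuous_id)) continuous_const
    have hne : {z : X | p (y - z) < ε / 4}.Nonempty :=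
      ⟨y, by simp only [Set.mem_setOf_eq, sub_self, map_zero]; linarith⟩
    obtain ⟨x, hxX₀, hx⟩ := hX₀.exists_mem_open hopen hne
    exact Set.mem_iUnion.2 ⟨⟨x, hxX₀⟩, hx⟩
  obtain ⟨t, ht⟩ := hK.elim_finite_subcover _ (fun i : X₀ => hUopen (i : X)) hcov
  -- the list of centers
  set xs : List X := t.toList.map Subtype.val with hxsdef
  have hxsX₀ : ∀ x ∈ xs, x ∈ X₀ := by
    intro x hx
    rw [hxsdef] at hx
    obtain ⟨i, hi, rfl⟩ := List.mem_map.1 hx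
    exact i.2
  set n := xs.length with hndef
  set B := C + max (p xd) (xs.foldr (fun v r => max (p v) r) 0) with hBdef
  have hB0 : 0 ≤ B := by
    have h1 : 0 ≤ p xd := apply_nonneg p xd
    have := le_max_left (p xd) (xs.foldr (fun v r => max (p v) r) 0)
    rw [hBdef]; linarith
  have hxB : ∀ ω, ∀ x ∈ xs, p (f ω - x) ≤ B := by
    intro ω x hx
    have h1 : p (f ω - x) ≤ p (f ω) + p x := map_sub_le_add p _ _
    have h2 : p x ≤ xs.foldr (fun v r => max (p v) r) 0 := le_foldr_max (fun v => p v) xs hx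
    have h3 := le_max_right (p xd) (xs.foldr (fun v r => max (p v) r) 0)
    rw [hBdef]; linarith [hC ω]
  have hxdB : ∀ ω, p (f ω - xd) ≤ B := by
    intro ω
    have h1 : p (f ω - xd) ≤ p (f ω) + p xd := map_sub_le_add p _ _
    have h3 := le_max_left (p xd) (xs.foldr (fun v r => max (p v) r) 0)
    rw [hBdef]; linarith [hC ω]
  set δ := ε / (4 * (n + 1) * (B + 1)) with hδdef
  have hδpos : 0 < δ := by
    have h1 : (0:ℝ) < (n : ℝ) + 1 := by positivity
    have h2 : (0:ℝ) < B + 1 := by linarith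
    rw [hδdef]
    exact div_pos hε (by positivity)
  -- multipliers adapted to each center
  have hψex : ∀ x : X, ∃ ψ : Ω → ℝ, IsMult W ψ ∧
      (∀ ω, ε / 2 ≤ p (f ω - x) → ψ ω ≤ δ) ∧
      (∀ ω, p (f ω - x) ≤ ε / 4 → 1 - δ ≤ ψ ω) := by
    intro x
    have hz1 : IsZeroSet {ω : Ω | ε / 2 ≤ p (f ω - x)} := by
      refine ⟨fun ω => max (ε / 2 - p (f ω - x)) 0,
        (continuous_const.sub (hp.comp (hf.sub continuous_const))).max continuous_const, ?_⟩
      ext ω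
      simp only [Set.mem_setOf_eq, Set.mem_preimage, Set.mem_singleton_iff,
        max_eq_right_iff, sub_nonpos]
    have hz2 : IsZeroSet {ω : Ω | p (f ω - x) ≤ ε / 4} := by
      refine ⟨fun ω => max (p (f ω - x) - ε / 4) 0,
        ((hp.comp (hf.sub continuous_const)).sub continuous_const).max continuous_const, ?_⟩
      ext ω
      simp only [Set.mem_setOf_eq, Set.mem_preimage, Set.mem_singleton_iff,
        max_eq_right_iff, sub_nonpos]
    have hdisj : {ω : Ω | ε / 2 ≤ p (f ω - x)} ∩ {ω : Ω | p (f ω - x) ≤ ε / 4} = ∅ := by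
      rw [Set.eq_empty_iff_forall_notMem]
      rintro ω ⟨h1, h2⟩
      simp only [Set.mem_setOf_eq] at h1 h2
      linarith
    obtain ⟨φ, hφA, hφsep⟩ := hsep _ _ hz1 hz2 hdisj
    have hφM : IsMult W φ := ⟨hAc φ hφA, hA01 φ hφA, hmul φ hφA⟩
    obtain ⟨ψ, hψM, hψ0, hψ1⟩ := hφM.exists_separating hφsep hδpos
    exact ⟨ψ, hψM, fun ω hω => hψ0 ω hω, fun ω hω => hψ1 ω hω⟩
  choose ψ hψM hψout hψin using hψex
  -- the approximation
  set pairs : List ((Ω → ℝ) × X) := xs.map (fun x => (ψ x, x)) with hpairsdef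
  set g : Ω → X := mixList pairs (fun _ => xd) with hgdef
  have hgW : g ∈ W := by
    refine mixList_mem pairs _ ?_ (hconst xd hxd)
    intro q hq
    obtain ⟨x, hx, rfl⟩ := List.mem_map.1 hq
    exact ⟨hψM x, hconst x (hxsX₀ x hx)⟩
  refine ⟨g, hgW, fun ω => ?_⟩
  -- estimate at ω
  have hest := mixList_est p (f ω) ω (by linarith : (0:ℝ) ≤ ε / 2) hδpos.le hB0 pairs
    (fun _ => xd) ?_ (hxdB ω)
  · -- the product term is at most δ
    have hyK : f ω ∈ closure (Set.range f) := subset_closure ⟨ω, rfl⟩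
    obtain ⟨i, hit, hball⟩ := Set.mem_iUnion₂.1 (ht hyK)
    have htrig : 1 - ψ (i : X) ω ≤ δ := by
      have := hψin (i : X) ω (le_of_lt hball)
      linarith
    have hmemxs : (i : X) ∈ xs := by
      rw [hxsdef]
      exact List.mem_map.2 ⟨i, (Finset.mem_toList).2 hit, rfl⟩
    have hmemprod : (1 - ψ (i : X) ω) ∈ (pairs.map fun q => 1 - q.1 ω) := by
      refine List.mem_map.2 ⟨(ψ (i : X), (i : X)), ?_, rfl⟩
      exact List.mem_map.2 ⟨(i : X), hmemxs, rfl⟩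
    have hfacts : ∀ b ∈ (pairs.map fun q => 1 - q.1 ω), b ∈ Set.Icc (0:ℝ) 1 := by
      intro b hb
      obtain ⟨q, hq, rfl⟩ := List.mem_map.1 hb
      obtain ⟨x, hx, rfl⟩ := List.mem_map.1 hq
      obtain ⟨h1, h2⟩ := (hψM x).2.1 ω
      exact ⟨by linarith, by linarith⟩
    have hprodδ : (pairs.map fun q => 1 - q.1 ω).prod ≤ δ :=
      list_prod_le_of_mem' hfacts hmemprod htrig hδpos.le
    have hprod0 : 0 ≤ (pairs.map fun q => 1 - q.1 ω).prod :=
      list_prod_nonneg' fun b hb => (hfacts b hb).1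
    have hlenpairs : (pairs.length : ℝ) = (n : ℝ) := by
      rw [hpairsdef, List.length_map, hndef]
    rw [hlenpairs] at hest
    have hPB : (pairs.map fun q => 1 - q.1 ω).prod * B ≤ δ * B :=
      mul_le_mul_of_nonneg_right hprodδ hB0
    have hnum : ((n : ℝ) + 1) * δ * B ≤ ε / 4 := by
      have hδeq : δ * (((n:ℝ) + 1) * (B + 1)) = ε / 4 := by
        rw [hδdef]
        field_simp
      nlinarith [mul_nonneg (mul_nonneg (by positivity : (0:ℝ) ≤ (n:ℝ)+1) hδpos.le) hB0,
        mul_nonneg (by positivity : (0:ℝ) ≤ (n:ℝ)+1) hδpos.le]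
    have : p (f ω - g ω) ≤ ε / 2 + (n : ℝ) * δ * B + δ * B := by
      calc p (f ω - g ω) ≤ ε / 2 + (n : ℝ) * δ * B + (pairs.map fun q => 1 - q.1 ω).prod * B :=
            hest
        _ ≤ ε / 2 + (n : ℝ) * δ * B + δ * B := add_le_add_right hPB _
    nlinarith [this, hnum]
  · -- hypotheses of the estimate
    intro q hq
    obtain ⟨x, hx, rfl⟩ := List.mem_map.1 hq
    refine ⟨(hψM x).2.1 ω, hxB ω x hx, ?_⟩
    by_cases hcase : p (f ω - x) < ε / 2
    · exact Or.inl hcase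
    · exact Or.inr (hψout x ω (not_lt.1 hcase))
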